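/- Let $d \ge 1$ and let $u$ be a unit vector in $\mathbb{Z}^d$ and $x$ a unit vector with $x \neq \pm u$. Then the number of nearest-neighbor paths of length 4 from $u$ to $x$ in $\mathbb{Z}^d$ that avoid both $\mathbf{0}$ and $v := u + x$ is exactly $2(2d - 4)$. -/
import Mathlib


open MeasureTheory
open scoped ENNReal NNReal

/-- Vertices of the hypercubic lattice `ℤ^d`. -/
abbrev Vertex (d : ℕ) := Fin d → ℤ

/-- A site-percolation configuration: each vertex is occupied (`true`) or vacant. -/
abbrev Config (d : ℕ) := Vertex d → Bool

/-- The ℓ¹ norm `|x|₁ = ∑ᵢ |xᵢ|`. -/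
def dist1 {d : ℕ} (x : Vertex d) : ℕ := ∑ i, (x i).natAbs

/-- Nearest neighbours. -/
def IsNbr {d : ℕ} (x y : Vertex d) : Prop := dist1 (x - y) = 1

/-- `ConnIn ω S l x y`: `x` is connected to `y` by a nearest-neighbour path with at
least `l` edges all of whose internal vertices are occupied in `ω` and lie in `S`. -/
def ConnIn {d : ℕ} (ω : Config d) (S : Set (Vertex d)) (l : ℕ) (x y : Vertex d) : Prop :=
  x ≠ y ∧ ∃ (k : ℕ) (γ : ℕ → Vertex d), l ≤ k ∧ γ 0 = x ∧ γ k = y ∧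
    (∀ i < k, IsNbr (γ i) (γ (i + 1))) ∧
    ∀ i, 0 < i → i < k → (ω (γ i) = true ∧ γ i ∈ S)

/-- `x ⟷ y` : connection by an occupied path. -/
def Conn {d : ℕ} (ω : Config d) (x y : Vertex d) : Prop := ConnIn ω Set.univ 1 x y

/-- `μ` is the law of i.i.d. Bernoulli(`p`) site percolation on `ℤ^d`. -/
def IsBernoulli (d : ℕ) (p : ℝ) (μ : Measure (Config d)) : Prop :=
  IsProbabilityMeasure μ ∧
  ∀ (s : Finset (Vertex d)) (b : Vertex d → Bool),
    μ {ω | ∀ v ∈ s, ω v = b v} = ∏ v ∈ s, ENNReal.ofReal (if b v then p else 1 - p)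

/-- The two-point function `τ_p(x)`. -/
noncomputable def tau {d : ℕ} (μ : Measure (Config d)) (x : Vertex d) : ℝ≥0∞ :=
  μ {ω | Conn ω 0 x}

/-- `τ_p^{(l)}(x)`: probability of a connection using at least `l` edges. -/
noncomputable def tauL {d : ℕ} (μ : Measure (Config d)) (l : ℕ) (x : Vertex d) : ℝ≥0∞ :=
  μ {ω | ConnIn ω Set.univ l 0 x}

/-- `J(x) = 𝟙{|x|₁ = 1}` (ℝ≥0∞-valued). -/
noncomputable def Jfun {d : ℕ} (x : Vertex d) : ℝ≥0∞ := if dist1 x = 1 then 1 else 0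

/-- `m`-fold convolution `J^{*m}` (ℝ≥0∞-valued). -/
noncomputable def Jpow {d : ℕ} : ℕ → Vertex d → ℝ≥0∞
  | 0, x => if x = 0 then 1 else 0
  | m + 1, x => ∑' y, Jfun y * Jpow m (x - y)

variable {d : ℕ}

lemma eq_single_of_dist1_one {v : Vertex d} (h : dist1 v = 1) :
    ∃ k, v = Pi.single k (v k) ∧ (v k = 1 ∨ v k = -1) := by
  have hex : ∃ k, v k ≠ 0 := by
    by_contra hc
    push_neg at hc
    simp [dist1, hc] at h
  obtain ⟨k, hk⟩ := hex
  have hsum := Finset.add_sum_erase Finset.univ (fun i => (v i).natAbs) (Finset.mem_univ k)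
  have h1 : (v k).natAbs + ∑ i ∈ Finset.univ.erase k, (v i).natAbs = 1 := by
    rw [hsum]; exact h
  have hk1 : (v k).natAbs = 1 ∧ ∑ i ∈ Finset.univ.erase k, (v i).natAbs = 0 := by
    have := Int.natAbs_pos.mpr hk
    omega
  have hz : ∀ i ∈ Finset.univ.erase k, (v i).natAbs = 0 := by
    intro i hi
    exact (Finset.sum_eq_zero_iff.mp hk1.2) i hi
  refine ⟨k, ?_, ?_⟩
  · funext l
    rcases eq_or_ne l k with rfl | hlk
    · simp
    · have : (v l).natAbs = 0 := hz l (by simp [hlk])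
      simp [Pi.single_apply, hlk, Int.natAbs_eq_zero.mp this]
  · have := hk1.1
    omega

lemma dist1_sum_units {n : ℕ} (v : Fin n → Vertex d)
    (h1 : ∀ m, dist1 (v m) = 1)
    (h2 : ∀ m l : Fin n, m ≠ l → v m + v l ≠ 0) :
    dist1 (∑ m, v m) = n := by
  have key : ∀ t, ((∑ m, v m) t).natAbs = ∑ m, ((v m) t).natAbs := by
    intro t
    have hsign : (∀ m, 0 ≤ v m t) ∨ (∀ m, v m t ≤ 0) := by
      by_contra hc
      push_neg at hc
      obtain ⟨⟨m, hm⟩, ⟨l, hl⟩⟩ := hc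
      have hml : m ≠ l := by rintro rfl; omega
      apply h2 m l hml
      obtain ⟨km, hkm, hvm⟩ := eq_single_of_dist1_one (h1 m)
      obtain ⟨kl, hkl, hvl⟩ := eq_single_of_dist1_one (h1 l)
      have hkm' : km = t := by
        by_contra hne
        have : v m t = 0 := by rw [hkm, Pi.single_apply]; simp [Ne.symm hne]
        omega
      have hkl' : kl = t := by
        by_contra hne
        have : v l t = 0 := by rw [hkl, Pi.single_apply]; simp [Ne.symm hne]
        omega
      rw [hkm'] at hvm
      rw [hkl'] at hvl
      have hm1 : v m t = -1 := by omega
      have hl1 : v l t = 1 := by omega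
      rw [hkm, hkl, hkm', hkl', hm1, hl1]
      funext c
      simp only [Pi.single_apply, Pi.add_apply, Pi.zero_apply]
      split <;> ring
    have hpt : (∑ m, v m) t = ∑ m, v m t := by simp
    rcases hsign with hs | hs
    · have : ((∑ m, v m t).natAbs : ℤ) = ∑ m, (((v m t).natAbs : ℤ)) := by
        rw [Int.natAbs_of_nonneg (Finset.sum_nonneg fun m _ => hs m)]
        exact Finset.sum_congr rfl fun m _ => (Int.natAbs_of_nonneg (hs m)).symm
      rw [hpt]
      exact_mod_cast this
    · have : ((∑ m, v m t).natAbs : ℤ) = ∑ m, (((v m t).natAbs : ℤ)) := by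
        rw [← Int.abs_eq_natAbs, abs_of_nonpos (Finset.sum_nonpos fun m _ => hs m),
          ← Finset.sum_neg_distrib]
        exact Finset.sum_congr rfl fun m _ => by
          rw [← Int.abs_eq_natAbs, abs_of_nonpos (hs m)]
      rw [hpt]
      exact_mod_cast this
  calc dist1 (∑ m, v m) = ∑ t, ∑ m, ((v m) t).natAbs := by
        unfold dist1; exact Finset.sum_congr rfl fun t _ => key t
    _ = ∑ m, ∑ t, ((v m) t).natAbs := Finset.sum_comm
    _ = ∑ m : Fin n, 1 := Finset.sum_congr rfl fun m _ => h1 m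
    _ = n := by simp

lemma dist1_neg (v : Vertex d) : dist1 (-v) = dist1 v := by
  unfold dist1; exact Finset.sum_congr rfl fun t _ => by simp

lemma dist1_eq_zero {v : Vertex d} : dist1 v = 0 ↔ v = 0 := by
  unfold dist1
  rw [Finset.sum_eq_zero_iff]
  constructor
  · intro h; funext t; simpa using Int.natAbs_eq_zero.mp (h t (Finset.mem_univ t))
  · rintro rfl t _; simp

lemma dist1_add_le (v w : Vertex d) : dist1 (v + w) ≤ dist1 v + dist1 w := by
  unfold dist1
  rw [← Finset.sum_add_distrib]
  exact Finset.sum_le_sum fun t _ => by simpa using Int.natAbs_add_le (v t) (w t)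

lemma dist1_single (k : Fin d) (c : ℤ) : dist1 (Pi.single k c) = c.natAbs := by
  unfold dist1
  rw [Finset.sum_eq_single k]
  · simp
  · intro t _ ht; simp [Pi.single_apply, ht]
  · simp

lemma dist1_two {a b : Vertex d} (ha : dist1 a = 1) (hb : dist1 b = 1)
    (hab : a + b ≠ 0) : dist1 (a + b) = 2 := by
  have := dist1_sum_units ![a, b] (by intro m; fin_cases m <;> simpa)
    (by intro m l hml; fin_cases m <;> fin_cases l <;> simp_all [add_comm])
  simpa [Fin.sum_univ_two] using this

lemma dist1_three {a b c : Vertex d} (ha : dist1 a = 1) (hb : dist1 b = 1)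
    (hc : dist1 c = 1) (hab : a + b ≠ 0) (hac : a + c ≠ 0) (hbc : b + c ≠ 0) :
    dist1 (a + b + c) = 3 := by
  have := dist1_sum_units ![a, b, c] (by intro m; fin_cases m <;> simpa)
    (by intro m l hml; fin_cases m <;> fin_cases l <;> simp_all [add_comm])
  simpa [Fin.sum_univ_three] using this

lemma dist1_four {a b c e : Vertex d} (ha : dist1 a = 1) (hb : dist1 b = 1)
    (hc : dist1 c = 1) (he : dist1 e = 1) (hab : a + b ≠ 0) (hac : a + c ≠ 0)
    (hae : a + e ≠ 0) (hbc : b + c ≠ 0) (hbe : b + e ≠ 0) (hce : c + e ≠ 0) :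
    dist1 (a + b + c + e) = 4 := by
  have := dist1_sum_units ![a, b, c, e] (by intro m; fin_cases m <;> simpa)
    (by intro m l hml; fin_cases m <;> fin_cases l <;> simp_all [add_comm])
  simpa [Fin.sum_univ_four] using this

lemma eq_matrix5 {α : Type*} (γ : Fin 5 → α) (a b c e f : α) (h0 : γ 0 = a)
    (h1 : γ 1 = b) (h2 : γ 2 = c) (h3 : γ 3 = e) (h4 : γ 4 = f) :
    γ = ![a, b, c, e, f] := by
  funext m; fin_cases m <;> simpa

lemma path_classify (u x : Vertex d) (hu : dist1 u = 1) (hx : dist1 x = 1)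
    (h1 : x ≠ u) (h2 : x ≠ -u) (γ : Fin 5 → Vertex d)
    (hg0 : γ 0 = u) (hg4 : γ 4 = x) (hinj : Function.Injective γ)
    (hn : ∀ i : Fin 4, IsNbr (γ i.castSucc) (γ i.succ))
    (hv10 : γ 1 ≠ 0) (hv1ux : γ 1 ≠ u + x)
    (hv20 : γ 2 ≠ 0) (hv2ux : γ 2 ≠ u + x)
    (hv30 : γ 3 ≠ 0) (hv3ux : γ 3 ≠ u + x) :
    ∃ z, dist1 z = 1 ∧ z ≠ u ∧ z ≠ -u ∧ z ≠ x ∧ z ≠ -x ∧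
      (γ = ![u, u + z, z, z + x, x] ∨ γ = ![u, u + z, u + z + x, z + x, x]) := by
  have flp : ∀ p q : Vertex d, IsNbr p q → dist1 (q - p) = 1 := by
    intro p q h
    rw [show q - p = -(p - q) by abel, dist1_neg]
    exact h
  have n0 : dist1 (γ 1 - γ 0) = 1 := flp _ _ (by simpa using hn 0)
  have n1 : dist1 (γ 2 - γ 1) = 1 := flp _ _ (by simpa using hn 1)
  have n2 : dist1 (γ 3 - γ 2) = 1 := flp _ _ (by simpa using hn 2)
  have n3 : dist1 (γ 4 - γ 3) = 1 := flp _ _ (by simpa using hn 3)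
  obtain ⟨z, e1⟩ : ∃ z, γ 1 = u + z := ⟨γ 1 - u, by abel⟩
  obtain ⟨w, e2⟩ : ∃ w, γ 2 = γ 1 + w := ⟨γ 2 - γ 1, by abel⟩
  obtain ⟨w2, e3⟩ : ∃ w2, γ 3 = γ 2 + w2 := ⟨γ 3 - γ 2, by abel⟩
  have nz : dist1 z = 1 := by
    rw [show z = γ 1 - γ 0 from by rw [hg0, e1]; abel]; exact n0
  have nw : dist1 w = 1 := by
    rw [show w = γ 2 - γ 1 from by rw [e2]; abel]; exact n1
  have nw2 : dist1 w2 = 1 := by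
    rw [show w2 = γ 3 - γ 2 from by rw [e3]; abel]; exact n2
  have last_step : dist1 (γ 4 - γ 3) = 1 := n3
  have two_step : dist1 (γ 4 - γ 2) ≤ 2 := by
    calc dist1 (γ 4 - γ 2) = dist1 ((γ 4 - γ 3) + (γ 3 - γ 2)) := by
          rw [show γ 4 - γ 2 = (γ 4 - γ 3) + (γ 3 - γ 2) from by abel]
      _ ≤ dist1 (γ 4 - γ 3) + dist1 (γ 3 - γ 2) := dist1_add_le _ _
      _ ≤ 2 := by omega
  have PP : ∀ {p q : Vertex d}, p ≠ -q → p + q ≠ 0 :=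
    fun h hh => h (eq_neg_of_add_eq_zero_left hh)
  have PM : ∀ {p q : Vertex d}, q ≠ p → p + -q ≠ 0 := by
    intro p q h hh
    apply h
    have h' := eq_neg_of_add_eq_zero_left hh
    rw [neg_neg] at h'
    exact h'.symm
  have MM : ∀ {p q : Vertex d}, q ≠ -p → -p + -q ≠ 0 := by
    intro p q h hh
    apply h
    have h' := eq_neg_of_add_eq_zero_left hh
    rw [neg_neg] at h'
    exact h'.symm
  have SS : ∀ {p : Vertex d}, dist1 p = 1 → p + p ≠ 0 := by
    intro p hp hh
    have hp0 : p = 0 := by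
      funext t
      have ht := congrFun hh t
      simp only [Pi.add_apply, Pi.zero_apply] at ht
      simp only [Pi.zero_apply]
      omega
    rw [hp0] at hp
    simp [dist1] at hp
  have MS : ∀ {p : Vertex d}, dist1 p = 1 → -p + -p ≠ 0 := by
    intro p hp hh
    exact SS hp (by rw [show p + p = -(-p + -p) from by abel, hh, neg_zero])
  have hnu : dist1 (-u) = 1 := by rw [dist1_neg]; exact hu
  have hnx : dist1 (-x) = 1 := by rw [dist1_neg]; exact hx
  have hnz : dist1 (-z) = 1 := by rw [dist1_neg]; exact nz
  have hnw : dist1 (-w) = 1 := by rw [dist1_neg]; exact nw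
  have hnw2 : dist1 (-w2) = 1 := by rw [dist1_neg]; exact nw2
  by_cases cz1 : z = -u
  · exact absurd (show γ 1 = 0 from by rw [e1, cz1]; abel) hv10
  by_cases cz2 : z = x
  · exact absurd (show γ 1 = u + x from by rw [e1, cz2]) hv1ux
  by_cases cz3 : z = u
  · -- first step along u
    by_cases cwa : w = u
    · have hf : γ 4 - γ 2 = x + -u + -u + -u := by rw [hg4, e2, e1, cz3, cwa]; abel
      rw [hf, dist1_four hx hnu hnu hnu (PM (Ne.symm h1)) (PM (Ne.symm h1))
        (PM (Ne.symm h1)) (MS hu) (MS hu) (MS hu)] at two_step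
      exact absurd two_step (by norm_num)
    by_cases cwb : w = -u
    · have hq : γ 2 = γ 0 := by rw [e2, e1, cz3, cwb, hg0]; abel
      exact absurd (hinj hq) (by decide)
    by_cases cwc : w = x
    · by_cases cva : w2 = u
      · have hf : γ 4 - γ 3 = -u + -u + -u := by rw [hg4, e3, e2, e1, cz3, cwc, cva]; abel
        rw [hf, dist1_three hnu hnu hnu (MS hu) (MS hu) (MS hu)] at last_step
        exact absurd last_step (by norm_num)
      by_cases cvb : w2 = -u
      · exact absurd (show γ 3 = u + x from by rw [e3, e2, e1, cz3, cwc, cvb]; abel) hv3ux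
      by_cases cvc : w2 = x
      · have hf : γ 4 - γ 3 = -u + -u + -x := by rw [hg4, e3, e2, e1, cz3, cwc, cvc]; abel
        rw [hf, dist1_three hnu hnu hnx (MS hu) (MM h2) (MM h2)] at last_step
        exact absurd last_step (by norm_num)
      by_cases cvd : w2 = -x
      · have hf : γ 4 - γ 3 = x + -u + -u := by rw [hg4, e3, e2, e1, cz3, cwc, cvd]; abel
        rw [hf, dist1_three hx hnu hnu (PM (Ne.symm h1)) (PM (Ne.symm h1)) (MS hu)] at last_step
        exact absurd last_step (by norm_num)
      · have hf : γ 4 - γ 3 = -u + -u + -w2 := by rw [hg4, e3, e2, e1, cz3, cwc]; abel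
        rw [hf, dist1_three hnu hnu hnw2 (MS hu) (MM cvb) (MM cvb)] at last_step
        exact absurd last_step (by norm_num)
    by_cases cwd : w = -x
    · have hf : γ 4 - γ 2 = x + x + -u + -u := by rw [hg4, e2, e1, cz3, cwd]; abel
      rw [hf, dist1_four hx hx hnu hnu (SS hx) (PM (Ne.symm h1)) (PM (Ne.symm h1))
        (PM (Ne.symm h1)) (PM (Ne.symm h1)) (MS hu)] at two_step
      exact absurd two_step (by norm_num)
    · have hf : γ 4 - γ 2 = x + -u + -u + -w := by rw [hg4, e2, e1, cz3]; abel
      rw [hf, dist1_four hx hnu hnu hnw (PM (Ne.symm h1)) (PM (Ne.symm h1)) (PM cwc)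
        (MS hu) (MM cwb) (MM cwb)] at two_step
      exact absurd two_step (by norm_num)
  by_cases cz4 : z = -x
  · -- first step along -x
    by_cases cwa : w = u
    · have hf : γ 4 - γ 2 = x + x + -u + -u := by rw [hg4, e2, e1, cz4, cwa]; abel
      rw [hf, dist1_four hx hx hnu hnu (SS hx) (PM (Ne.symm h1)) (PM (Ne.symm h1))
        (PM (Ne.symm h1)) (PM (Ne.symm h1)) (MS hu)] at two_step
      exact absurd two_step (by norm_num)
    by_cases cwb : w = -u
    · by_cases cva : w2 = u
      · have hf : γ 4 - γ 3 = x + x + -u := by rw [hg4, e3, e2, e1, cz4, cwb, cva]; abel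
        rw [hf, dist1_three hx hx hnu (SS hx) (PM (Ne.symm h1)) (PM (Ne.symm h1))] at last_step
        exact absurd last_step (by norm_num)
      by_cases cvb : w2 = -u
      · have hf : γ 4 - γ 3 = x + x + u := by rw [hg4, e3, e2, e1, cz4, cwb, cvb]; abel
        rw [hf, dist1_three hx hx hu (SS hx) (PP h2) (PP h2)] at last_step
        exact absurd last_step (by norm_num)
      by_cases cvc : w2 = x
      · exact absurd (show γ 3 = 0 from by rw [e3, e2, e1, cz4, cwb, cvc]; abel) hv30
      by_cases cvd : w2 = -x
      · have hf : γ 4 - γ 3 = x + x + x := by rw [hg4, e3, e2, e1, cz4, cwb, cvd]; abel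
        rw [hf, dist1_three hx hx hx (SS hx) (SS hx) (SS hx)] at last_step
        exact absurd last_step (by norm_num)
      · have hf : γ 4 - γ 3 = x + x + -w2 := by rw [hg4, e3, e2, e1, cz4, cwb]; abel
        rw [hf, dist1_three hx hx hnw2 (SS hx) (PM cvc) (PM cvc)] at last_step
        exact absurd last_step (by norm_num)
    by_cases cwc : w = x
    · have hq : γ 2 = γ 0 := by rw [e2, e1, cz4, cwc, hg0]; abel
      exact absurd (hinj hq) (by decide)
    by_cases cwd : w = -x
    · have hf : γ 4 - γ 2 = x + x + x + -u := by rw [hg4, e2, e1, cz4, cwd]; abel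
      rw [hf, dist1_four hx hx hx hnu (SS hx) (SS hx) (PM (Ne.symm h1)) (SS hx)
        (PM (Ne.symm h1)) (PM (Ne.symm h1))] at two_step
      exact absurd two_step (by norm_num)
    · have hf : γ 4 - γ 2 = x + x + -u + -w := by rw [hg4, e2, e1, cz4]; abel
      rw [hf, dist1_four hx hx hnu hnw (SS hx) (PM (Ne.symm h1)) (PM cwc)
        (PM (Ne.symm h1)) (PM cwc) (MM cwb)] at two_step
      exact absurd two_step (by norm_num)
  · -- first step generic
    by_cases cwa : w = u
    · have hf : γ 4 - γ 2 = x + -u + -u + -z := by rw [hg4, e2, e1, cwa]; abel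
      rw [hf, dist1_four hx hnu hnu hnz (PM (Ne.symm h1)) (PM (Ne.symm h1)) (PM cz2)
        (MS hu) (MM cz1) (MM cz1)] at two_step
      exact absurd two_step (by norm_num)
    by_cases cwb : w = -u
    · by_cases cva : w2 = u
      · have hf : γ 4 - γ 3 = x + -u + -z := by rw [hg4, e3, e2, e1, cwb, cva]; abel
        rw [hf, dist1_three hx hnu hnz (PM (Ne.symm h1)) (PM cz2) (MM cz1)] at last_step
        exact absurd last_step (by norm_num)
      by_cases cvb : w2 = -u
      · have hf : γ 4 - γ 3 = x + u + -z := by rw [hg4, e3, e2, e1, cwb, cvb]; abel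
        rw [hf, dist1_three hx hu hnz (PP h2) (PM cz2) (PM cz3)] at last_step
        exact absurd last_step (by norm_num)
      by_cases cvc : w2 = x
      · -- PATH A
        have e2' : γ 2 = z := by rw [e2, e1, cwb]; abel
        have e3' : γ 3 = z + x := by rw [e3, e2, e1, cwb, cvc]; abel
        exact ⟨z, nz, cz3, cz1, cz2, cz4,
          Or.inl (eq_matrix5 γ _ _ _ _ _ hg0 e1 e2' e3' hg4)⟩
      by_cases cvd : w2 = -x
      · have hf : γ 4 - γ 3 = x + x + -z := by rw [hg4, e3, e2, e1, cwb, cvd]; abel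
        rw [hf, dist1_three hx hx hnz (SS hx) (PM cz2) (PM cz2)] at last_step
        exact absurd last_step (by norm_num)
      by_cases cve : w2 = -z
      · exact absurd (show γ 3 = 0 from by rw [e3, e2, e1, cwb, cve]; abel) hv30
      by_cases cvf : w2 = z
      · have hf : γ 4 - γ 3 = x + -z + -z := by rw [hg4, e3, e2, e1, cwb, cvf]; abel
        rw [hf, dist1_three hx hnz hnz (PM cz2) (PM cz2) (MS nz)] at last_step
        exact absurd last_step (by norm_num)
      · have hf : γ 4 - γ 3 = x + -z + -w2 := by rw [hg4, e3, e2, e1, cwb]; abel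
        rw [hf, dist1_three hx hnz hnw2 (PM cz2) (PM cvc) (MM cve)] at last_step
        exact absurd last_step (by norm_num)
    by_cases cwc : w = x
    · by_cases cva : w2 = u
      · have hf : γ 4 - γ 3 = -u + -u + -z := by rw [hg4, e3, e2, e1, cwc, cva]; abel
        rw [hf, dist1_three hnu hnu hnz (MS hu) (MM cz1) (MM cz1)] at last_step
        exact absurd last_step (by norm_num)
      by_cases cvb : w2 = -u
      · -- PATH B
        have e2' : γ 2 = u + z + x := by rw [e2, e1, cwc]
        have e3' : γ 3 = z + x := by rw [e3, e2, e1, cwc, cvb]; abel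
        exact ⟨z, nz, cz3, cz1, cz2, cz4,
          Or.inr (eq_matrix5 γ _ _ _ _ _ hg0 e1 e2' e3' hg4)⟩
      by_cases cvc : w2 = x
      · have hf : γ 4 - γ 3 = -u + -z + -x := by rw [hg4, e3, e2, e1, cwc, cvc]; abel
        rw [hf, dist1_three hnu hnz hnx (MM cz1) (MM h2)
          (MM (fun hh => cz4 (by rw [hh, neg_neg])))] at last_step
        exact absurd last_step (by norm_num)
      by_cases cvd : w2 = -x
      · have hf : γ 4 - γ 3 = x + -u + -z := by rw [hg4, e3, e2, e1, cwc, cvd]; abel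
        rw [hf, dist1_three hx hnu hnz (PM (Ne.symm h1)) (PM cz2) (MM cz1)] at last_step
        exact absurd last_step (by norm_num)
      by_cases cve : w2 = -z
      · exact absurd (show γ 3 = u + x from by rw [e3, e2, e1, cwc, cve]; abel) hv3ux
      by_cases cvf : w2 = z
      · have hf : γ 4 - γ 3 = -u + -z + -z := by rw [hg4, e3, e2, e1, cwc, cvf]; abel
        rw [hf, dist1_three hnu hnz hnz (MM cz1) (MM cz1) (MS nz)] at last_step
        exact absurd last_step (by norm_num)
      · have hf : γ 4 - γ 3 = -u + -z + -w2 := by rw [hg4, e3, e2, e1, cwc]; abel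
        rw [hf, dist1_three hnu hnz hnw2 (MM cz1) (MM cvb) (MM cve)] at last_step
        exact absurd last_step (by norm_num)
    by_cases cwd : w = -x
    · have hf : γ 4 - γ 2 = x + x + -u + -z := by rw [hg4, e2, e1, cwd]; abel
      rw [hf, dist1_four hx hx hnu hnz (SS hx) (PM (Ne.symm h1)) (PM cz2)
        (PM (Ne.symm h1)) (PM cz2) (MM cz1)] at two_step
      exact absurd two_step (by norm_num)
    by_cases cwe : w = -z
    · have hq : γ 2 = γ 0 := by rw [e2, e1, cwe, hg0]; abel
      exact absurd (hinj hq) (by decide)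
    by_cases cwf : w = z
    · have hf : γ 4 - γ 2 = x + -u + -z + -z := by rw [hg4, e2, e1, cwf]; abel
      rw [hf, dist1_four hx hnu hnz hnz (PM (Ne.symm h1)) (PM cz2) (PM cz2)
        (MM cz1) (MM cz1) (MS nz)] at two_step
      exact absurd two_step (by norm_num)
    · have hf : γ 4 - γ 2 = x + -u + -z + -w := by rw [hg4, e2, e1]; abel
      rw [hf, dist1_four hx hnu hnz hnw (PM (Ne.symm h1)) (PM cz2) (PM cwc)
        (MM cz1) (MM cwb) (MM cwe)] at two_step
      exact absurd two_step (by norm_num)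

lemma ne_of_dist1_ne {p q : Vertex d} (h : dist1 (p - q) ≠ 0) : p ≠ q := by
  intro e
  apply h
  rw [e, sub_self]
  simp [dist1]

lemma path_nes (u x z : Vertex d) (hu : dist1 u = 1) (hx : dist1 x = 1)
    (hz : dist1 z = 1) (h1 : x ≠ u) (h2 : x ≠ -u)
    (hz1 : z ≠ u) (hz2 : z ≠ -u) (hz3 : z ≠ x) (hz4 : z ≠ -x) :
    u ≠ 0 ∧ x ≠ 0 ∧ z ≠ 0 ∧ u ≠ x ∧ u ≠ z ∧ z ≠ x ∧
    u + z ≠ 0 ∧ z + x ≠ 0 ∧ u + x ≠ 0 ∧ u + z + x ≠ 0 ∧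
    u ≠ z + x ∧ u + z ≠ z + x ∧ u + z ≠ x ∧ u ≠ u + z + x ∧
    u + z ≠ u + x ∧ z ≠ u + x ∧ z + x ≠ u + x ∧ u + z + x ≠ u + x := by
  have PP : ∀ {p q : Vertex d}, p ≠ -q → p + q ≠ 0 :=
    fun h hh => h (eq_neg_of_add_eq_zero_left hh)
  have hu0 : u ≠ 0 := fun h => by rw [h] at hu; simp [dist1] at hu
  have hx0 : x ≠ 0 := fun h => by rw [h] at hx; simp [dist1] at hx
  have hz0 : z ≠ 0 := fun h => by rw [h] at hz; simp [dist1] at hz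
  have hnx : dist1 (-x) = 1 := by rw [dist1_neg]; exact hx
  have hnu : dist1 (-u) = 1 := by rw [dist1_neg]; exact hu
  have huz0 : u + z ≠ 0 := PP (fun h => hz2 (by rw [h, neg_neg]))
  have hzx0 : z + x ≠ 0 := fun h => hz4 (eq_neg_of_add_eq_zero_left h)
  have hux0 : u + x ≠ 0 := PP (fun h => h2 (by rw [h, neg_neg]))
  have huzx0 : u + z + x ≠ 0 := by
    intro h
    have hzval : z = -u + -x := by
      have := eq_neg_of_add_eq_zero_left h
      rw [show u + z = z + u from by abel] at h
      have h' := eq_neg_of_add_eq_zero_left (show z + (u + x) = 0 from by rw [← h]; abel)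
      rw [h']; abel
    rw [hzval, dist1_two hnu hnx (fun hh => h2 (by
      have := eq_neg_of_add_eq_zero_left hh
      rw [show x = -(-x) from by abel, ← this]))] at hz
    exact absurd hz (by norm_num)
  refine ⟨hu0, hx0, hz0, Ne.symm h1, ?_, hz3, huz0, hzx0, hux0, huzx0, ?_, ?_, ?_, ?_, ?_, ?_, ?_, ?_⟩
  · exact fun h => hz1 h.symm
  · -- u ≠ z + x
    intro h
    have : z = u + -x := by rw [h]; abel
    rw [this, dist1_two hu hnx (fun hh => h1 (by
      have := eq_neg_of_add_eq_zero_left hh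
      rw [show x = -(-x) from by abel, ← this])), ] at hz
    exact absurd hz (by norm_num)
  · -- u + z ≠ z + x
    intro h
    apply h1
    have h' : u + z = x + z := by rw [h]; abel
    exact (add_right_cancel h').symm
  · -- u + z ≠ x
    intro h
    have : z = x + -u := by rw [← h]; abel
    rw [this, dist1_two hx hnu (fun hh => h1 (by
      simpa using eq_neg_of_add_eq_zero_left hh))] at hz
    exact absurd hz (by norm_num)
  · -- u ≠ u + z + x
    intro h
    apply hzx0
    have hh : z + x = u + z + x - u := by abel
    rw [← h] at hh
    rw [hh]
    abel
  · exact fun h => hz3 (add_left_cancel h)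
  · -- z ≠ u + x
    intro h
    rw [h, dist1_two hu hx hux0] at hz
    exact absurd hz (by norm_num)
  · exact fun h => hz1 (add_right_cancel h)
  · -- u + z + x ≠ u + x
    intro h
    apply hz0
    have hh : z = u + z + x - (u + x) := by abel
    rw [h] at hh
    rw [hh]
    abel

lemma pathA_mem (u x z : Vertex d) (hu : dist1 u = 1) (hx : dist1 x = 1)
    (hz : dist1 z = 1) (h1 : x ≠ u) (h2 : x ≠ -u)
    (hz1 : z ≠ u) (hz2 : z ≠ -u) (hz3 : z ≠ x) (hz4 : z ≠ -x) :
    (![u, u + z, z, z + x, x] : Fin 5 → Vertex d) 0 = u ∧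
    (![u, u + z, z, z + x, x] : Fin 5 → Vertex d) 4 = x ∧
    Function.Injective (![u, u + z, z, z + x, x] : Fin 5 → Vertex d) ∧
    (∀ i : Fin 4, IsNbr ((![u, u + z, z, z + x, x] : Fin 5 → Vertex d) i.castSucc)
      ((![u, u + z, z, z + x, x] : Fin 5 → Vertex d) i.succ)) ∧
    (![u, u + z, z, z + x, x] : Fin 5 → Vertex d) 1 ∉ ({0, u + x} : Set (Vertex d)) ∧
    (![u, u + z, z, z + x, x] : Fin 5 → Vertex d) 2 ∉ ({0, u + x} : Set (Vertex d)) ∧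
    (![u, u + z, z, z + x, x] : Fin 5 → Vertex d) 3 ∉ ({0, u + x} : Set (Vertex d)) := by
  obtain ⟨hu0, hx0, hz0, hux, huz, hzx, huz0, hzx0, hux0, huzx0, h01, h02, h03, h04, h05,
    h06, h07, h08⟩ := path_nes u x z hu hx hz h1 h2 hz1 hz2 hz3 hz4
  have hnz : dist1 (-z) = 1 := by rw [dist1_neg]; exact hz
  have hnx : dist1 (-x) = 1 := by rw [dist1_neg]; exact hx
  have huzzx : u ≠ z + x := h01
  refine ⟨rfl, rfl, ?_, ?_, ?_, ?_, ?_⟩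
  · intro m n hmn
    fin_cases m <;> fin_cases n <;> simp_all
  · intro m
    fin_cases m
    · show IsNbr u (u + z)
      unfold IsNbr
      rw [show u - (u + z) = -z from by abel, dist1_neg]
      exact hz
    · show IsNbr (u + z) z
      unfold IsNbr
      rw [show u + z - z = u from by abel]
      exact hu
    · show IsNbr z (z + x)
      unfold IsNbr
      rw [show z - (z + x) = -x from by abel, dist1_neg]
      exact hx
    · show IsNbr (z + x) x
      unfold IsNbr
      rw [show z + x - x = z from by abel]
      exact hz
  · simp only [Set.mem_insert_iff, Set.mem_singleton_iff, not_or]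
    exact ⟨by simpa using huz0, by simpa using h05⟩
  · simp only [Set.mem_insert_iff, Set.mem_singleton_iff, not_or]
    exact ⟨by simpa using hz0, by simpa using h06⟩
  · simp only [Set.mem_insert_iff, Set.mem_singleton_iff, not_or]
    exact ⟨by simpa using hzx0, by simpa using h07⟩

lemma pathB_mem (u x z : Vertex d) (hu : dist1 u = 1) (hx : dist1 x = 1)
    (hz : dist1 z = 1) (h1 : x ≠ u) (h2 : x ≠ -u)
    (hz1 : z ≠ u) (hz2 : z ≠ -u) (hz3 : z ≠ x) (hz4 : z ≠ -x) :
    (![u, u + z, u + z + x, z + x, x] : Fin 5 → Vertex d) 0 = u ∧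
    (![u, u + z, u + z + x, z + x, x] : Fin 5 → Vertex d) 4 = x ∧
    Function.Injective (![u, u + z, u + z + x, z + x, x] : Fin 5 → Vertex d) ∧
    (∀ i : Fin 4, IsNbr ((![u, u + z, u + z + x, z + x, x] : Fin 5 → Vertex d) i.castSucc)
      ((![u, u + z, u + z + x, z + x, x] : Fin 5 → Vertex d) i.succ)) ∧
    (![u, u + z, u + z + x, z + x, x] : Fin 5 → Vertex d) 1 ∉ ({0, u + x} : Set (Vertex d)) ∧
    (![u, u + z, u + z + x, z + x, x] : Fin 5 → Vertex d) 2 ∉ ({0, u + x} : Set (Vertex d)) ∧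
    (![u, u + z, u + z + x, z + x, x] : Fin 5 → Vertex d) 3 ∉ ({0, u + x} : Set (Vertex d)) := by
  obtain ⟨hu0, hx0, hz0, hux, huz, hzx, huz0, hzx0, hux0, huzx0, h01, h02, h03, h04, h05,
    h06, h07, h08⟩ := path_nes u x z hu hx hz h1 h2 hz1 hz2 hz3 hz4
  refine ⟨rfl, rfl, ?_, ?_, ?_, ?_, ?_⟩
  · intro m n hmn
    fin_cases m <;> fin_cases n <;> simp_all
  · intro m
    fin_cases m
    · show IsNbr u (u + z)
      unfold IsNbr
      rw [show u - (u + z) = -z from by abel, dist1_neg]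
      exact hz
    · show IsNbr (u + z) (u + z + x)
      unfold IsNbr
      rw [show u + z - (u + z + x) = -x from by abel, dist1_neg]
      exact hx
    · show IsNbr (u + z + x) (z + x)
      unfold IsNbr
      rw [show u + z + x - (z + x) = u from by abel]
      exact hu
    · show IsNbr (z + x) x
      unfold IsNbr
      rw [show z + x - x = z from by abel]
      exact hz
  · simp only [Set.mem_insert_iff, Set.mem_singleton_iff, not_or]
    exact ⟨by simpa using huz0, by simpa using h05⟩
  · simp only [Set.mem_insert_iff, Set.mem_singleton_iff, not_or]
    exact ⟨by simpa using huzx0, by simpa using h08⟩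
  · simp only [Set.mem_insert_iff, Set.mem_singleton_iff, not_or]
    exact ⟨by simpa using hzx0, by simpa using h07⟩

/-- for unit vectors `u`, `x` with `x ≠ ±u`, there are exactly `2(2d-4)`
nearest-neighbour paths of length 4 from `u` to `x` avoiding `0` and `u + x`. -/
theorem count_paths_length_four (d : ℕ) (hd : 1 ≤ d) (u x : Vertex d)
    (hu : dist1 u = 1) (hx : dist1 x = 1) (h1 : x ≠ u) (h2 : x ≠ -u) :
    Set.ncard {γ : Fin 5 → Vertex d | γ 0 = u ∧ γ 4 = x ∧ Function.Injective γ ∧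
        (∀ i : Fin 4, IsNbr (γ i.castSucc) (γ i.succ)) ∧
        γ 1 ∉ ({0, u + x} : Set (Vertex d)) ∧ γ 2 ∉ ({0, u + x} : Set (Vertex d)) ∧
        γ 3 ∉ ({0, u + x} : Set (Vertex d))} = 2 * (2 * d - 4) := by
  classical
  obtain ⟨i, hui, hai⟩ := eq_single_of_dist1_one hu
  obtain ⟨j, hxj, hbj⟩ := eq_single_of_dist1_one hx
  have single_neg' : ∀ (k : Fin d) (c : ℤ), (Pi.single k (-c) : Vertex d) = -(Pi.single k c : Vertex d) := by
    intro k c; funext t; by_cases h : t = k <;> simp [Pi.single_apply, h]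
  have hij : i ≠ j := by
    rintro rfl
    have hcases : x i = u i ∨ x i = -(u i) := by
      rcases hai with h | h <;> rcases hbj with h' | h' <;> omega
    rcases hcases with h | h
    · exact h1 (by rw [hxj, h, ← hui])
    · exact h2 (by rw [hxj, h, single_neg', ← hui])
  have hd2 : 2 ≤ d := by
    by_contra hc
    push_neg at hc
    have hi := i.isLt
    have hj := j.isLt
    exact hij (Fin.ext (by omega))
  obtain ⟨F, hFdef⟩ : ∃ F : Vertex d × Bool → (Fin 5 → Vertex d), F = fun p =>
      cond p.2 ![u, u + p.1, u + p.1 + x, p.1 + x, x] ![u, u + p.1, p.1, p.1 + x, x] :=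
    ⟨_, rfl⟩
  obtain ⟨Zf, hZfdef⟩ : ∃ Zf : Finset (Vertex d), Zf =
      ((Finset.univ.filter fun k : Fin d => k ≠ i ∧ k ≠ j) ×ˢ ({1, -1} : Finset ℤ)).image
        (fun p => Pi.single p.1 p.2) := ⟨_, rfl⟩
  have hZfprop : ∀ z ∈ Zf, dist1 z = 1 ∧ z ≠ u ∧ z ≠ -u ∧ z ≠ x ∧ z ≠ -x := by
    intro z hzm
    rw [hZfdef] at hzm
    obtain ⟨⟨k, c⟩, hkc, rfl⟩ := Finset.mem_image.mp hzm
    rw [Finset.mem_product, Finset.mem_filter] at hkc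
    obtain ⟨⟨-, hki, hkj⟩, hc⟩ := hkc
    simp only [Finset.mem_insert, Finset.mem_singleton] at hc
    have hc0 : c ≠ 0 := by rcases hc with rfl | rfl <;> norm_num
    have hone : dist1 (Pi.single k c) = 1 := by
      rw [dist1_single]; rcases hc with rfl | rfl <;> norm_num
    have hval : ∀ (l : Fin d) (a : ℤ), l ≠ k → (Pi.single k c : Vertex d) ≠ (Pi.single l a : Vertex d) := by
      intro l a hlk (h : (Pi.single k c : Vertex d) = Pi.single l a)
      have hck := congrFun h k
      rw [Pi.single_eq_same, Pi.single_eq_of_ne (Ne.symm hlk)] at hck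
      exact hc0 hck
    refine ⟨hone, ?_, ?_, ?_, ?_⟩
    · rw [hui]; exact hval i (u i) (Ne.symm hki)
    · rw [hui, ← single_neg']; exact hval i (-(u i)) (Ne.symm hki)
    · rw [hxj]; exact hval j (x j) (Ne.symm hkj)
    · rw [hxj, ← single_neg']; exact hval j (-(x j)) (Ne.symm hkj)
  have hZfmem : ∀ z : Vertex d, dist1 z = 1 → z ≠ u → z ≠ -u → z ≠ x → z ≠ -x → z ∈ Zf := by
    intro z hz hz1 hz2 hz3 hz4
    obtain ⟨k, hk, hc⟩ := eq_single_of_dist1_one hz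
    have hki : k ≠ i := by
      rintro rfl
      have hcases : z k = u k ∨ z k = -(u k) := by
        rcases hai with h | h <;> rcases hc with h' | h' <;> omega
      rcases hcases with h | h
      · exact hz1 (by rw [hk, h, ← hui])
      · exact hz2 (by rw [hk, h, single_neg', ← hui])
    have hkj : k ≠ j := by
      rintro rfl
      have hcases : z k = x k ∨ z k = -(x k) := by
        rcases hbj with h | h <;> rcases hc with h' | h' <;> omega
      rcases hcases with h | h
      · exact hz3 (by rw [hk, h, ← hxj])
      · exact hz4 (by rw [hk, h, single_neg', ← hxj])
    rw [hZfdef]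
    refine Finset.mem_image.mpr ⟨(k, z k), ?_, hk.symm⟩
    rw [Finset.mem_product, Finset.mem_filter]
    refine ⟨⟨Finset.mem_univ k, hki, hkj⟩, ?_⟩
    simp only [Finset.mem_insert, Finset.mem_singleton]
    exact hc
  have hset : {γ : Fin 5 → Vertex d | γ 0 = u ∧ γ 4 = x ∧ Function.Injective γ ∧
        (∀ i : Fin 4, IsNbr (γ i.castSucc) (γ i.succ)) ∧
        γ 1 ∉ ({0, u + x} : Set (Vertex d)) ∧ γ 2 ∉ ({0, u + x} : Set (Vertex d)) ∧
        γ 3 ∉ ({0, u + x} : Set (Vertex d))} =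
      ↑((Zf ×ˢ (Finset.univ : Finset Bool)).image F) := by
    ext γ
    simp only [Set.mem_setOf_eq, Finset.coe_image, Set.mem_image, Finset.mem_coe,
      Finset.mem_product, Finset.mem_univ, and_true]
    constructor
    · rintro ⟨hg0, hg4, hinj, hnbr, hv1, hv2, hv3⟩
      simp only [Set.mem_insert_iff, Set.mem_singleton_iff, not_or] at hv1 hv2 hv3
      obtain ⟨z, nz, z1, z2, z3, z4, hcase⟩ := path_classify u x hu hx h1 h2 γ hg0 hg4
        hinj hnbr hv1.1 hv1.2 hv2.1 hv2.2 hv3.1 hv3.2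
      rcases hcase with rfl | rfl
      · exact ⟨(z, false), hZfmem z nz z1 z2 z3 z4, by rw [hFdef]; rfl⟩
      · exact ⟨(z, true), hZfmem z nz z1 z2 z3 z4, by rw [hFdef]; rfl⟩
    · rintro ⟨⟨z, bb⟩, hzm, rfl⟩
      obtain ⟨nz, z1, z2, z3, z4⟩ := hZfprop z hzm
      cases bb
      · simp only [hFdef, Bool.cond_false]
        exact pathA_mem u x z hu hx nz h1 h2 z1 z2 z3 z4
      · simp only [hFdef, Bool.cond_true]
        exact pathB_mem u x z hu hx nz h1 h2 z1 z2 z3 z4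
  rw [hset, Set.ncard_coe_finset]
  have hinjF : Set.InjOn F ↑(Zf ×ˢ (Finset.univ : Finset Bool)) := by
    rintro ⟨z, bb⟩ hm ⟨z', bb'⟩ hm' hFe
    have hA := congrFun hFe 1
    have hB := congrFun hFe 2
    cases bb <;> cases bb' <;>
      simp only [hFdef, Bool.cond_false, Bool.cond_true, Matrix.cons_val_one,
        Matrix.head_cons] at hA hB
    · have hzz : z = z' := add_left_cancel hA
      rw [hzz]
    · have hzz : z = z' := add_left_cancel hA
      rw [← hzz] at hB
      simp only [Matrix.cons_val_two, Matrix.tail_cons, Matrix.head_cons] at hB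
      exfalso
      have h0 : u + x = 0 := by
        have hh : u + x = u + z + x - z := by abel
        rw [← hB] at hh
        simpa using hh
      exact absurd (by rw [eq_neg_of_add_eq_zero_left h0, neg_neg] : x = -u) h2
    · have hzz : z = z' := add_left_cancel hA
      rw [hzz] at hB
      simp only [Matrix.cons_val_two, Matrix.tail_cons, Matrix.head_cons] at hB
      exfalso
      have h0 : u + x = 0 := by
        have hh : u + x = u + z' + x - z' := by abel
        rw [hB] at hh
        simpa using hh
      exact absurd (by rw [eq_neg_of_add_eq_zero_left h0, neg_neg] : x = -u) h2
    · have hzz : z = z' := add_left_cancel hA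
      rw [hzz]
  rw [Finset.card_image_of_injOn hinjF, Finset.card_product, Finset.card_univ,
    Fintype.card_bool]
  have hZfcard : Zf.card = (d - 2) * 2 := by
    rw [hZfdef]
    rw [Finset.card_image_of_injOn ?inj, Finset.card_product]
    case inj =>
      rintro ⟨k, c⟩ hm ⟨k', c'⟩ hm' he
      simp only [Finset.coe_product, Set.mem_prod, Finset.mem_coe, Finset.mem_filter,
        Finset.mem_insert, Finset.mem_singleton] at hm hm'
      have hc0 : c ≠ 0 := by rcases hm.2 with rfl | rfl <;> norm_num
      replace he : (Pi.single k c : Vertex d) = Pi.single k' c' := he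
      have hkk : k = k' := by
        by_contra hne
        have hck := congrFun he k
        rw [Pi.single_eq_same, Pi.single_eq_of_ne hne] at hck
        exact hc0 hck
      subst hkk
      have hcc : c = c' := by
        have hck := congrFun he k
        rwa [Pi.single_eq_same, Pi.single_eq_same] at hck
      rw [hcc]
    congr 1
    · have hfil : (Finset.univ.filter fun k : Fin d => k ≠ i ∧ k ≠ j) =
          Finset.univ \ ({i, j} : Finset (Fin d)) := by
        ext k
        simp [Finset.mem_sdiff, not_or]
      rw [hfil, Finset.card_sdiff_of_subset (Finset.subset_univ _), Finset.card_univ, Fintype.card_fin,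
        Finset.card_insert_of_notMem (by simp [hij]), Finset.card_singleton]
  rw [hZfcard]
  omega
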